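/- Non-identifiability example: For the model C₁ ~ N(η,1), logit pr(A=1|c₁) = c₁² − 1, Y|a,c₁ ~ N(β₀ + β₁·a·|c₁|, φ), logit pr(R=1|c₁) = α₁·c₁, the two parameter sets (η,β₀,β₁,φ,α₁) = (1,0,1,1,−2) and (−1,0,1,1,2) induce identical observed-data distributions, i.e., the joint density of (A, C₁, Y) restricted to R=1 and of (A, Y) restricted to R=0 coincide under the two parameter sets. -/

import Mathlib

open Real

noncomputable section

/-- expit function. -/
def expit (t : ℝ) : ℝ := 1 / (1 + Real.exp (-t))

/-- Density of `N(m, φ)` at `x`. -/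
def normPdf (m φ x : ℝ) : ℝ :=
  (1 / Real.sqrt (2 * Real.pi * φ)) * Real.exp (-(x - m) ^ 2 / (2 * φ))

/-- `pr(A = a | c₁)` for the model `logit pr(A=1|c₁) = c₁² − 1`, `a : Bool`. -/
def prAc (a : Bool) (c₁ : ℝ) : ℝ :=
  if a then expit (c₁ ^ 2 - 1) else 1 - expit (c₁ ^ 2 - 1)

/-- Outcome density `pr(y | a, c₁; β₀, β₁, φ)` of `N(β₀ + β₁·a·|c₁|, φ)`. -/
def prYac (β₀ β₁ φ : ℝ) (a : Bool) (c₁ y : ℝ) : ℝ :=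
  normPdf (β₀ + β₁ * (if a then 1 else 0) * |c₁|) φ y

/-- Observed-data density on `R = 1`:
`pr(c₁;η)·pr(a|c₁)·pr(y|a,c₁;β,φ)·pr(R=1|c₁;α₁)`. -/
def obsDensR1 (η β₀ β₁ φ α₁ : ℝ) (a : Bool) (c₁ y : ℝ) : ℝ :=
  normPdf η 1 c₁ * prAc a c₁ * prYac β₀ β₁ φ a c₁ y * expit (α₁ * c₁)

/-- Integrand of the observed-data density on `R = 0`:
`pr(c₁;η)·pr(a|c₁)·pr(y|a,c₁;β,φ)·(1 − pr(R=1|c₁;α₁))`. -/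
def obsDensR0Integrand (η β₀ β₁ φ α₁ : ℝ) (a : Bool) (c₁ y : ℝ) : ℝ :=
  normPdf η 1 c₁ * prAc a c₁ * prYac β₀ β₁ φ a c₁ y * (1 - expit (α₁ * c₁))

/-- Non-identifiability example, Example 1: For the model
`C₁ ~ N(η,1)`, `logit pr(A=1|c₁) = c₁² − 1`, `Y|a,c₁ ~ N(β₀ + β₁·a·|c₁|, φ)`,
`logit pr(R=1|c₁) = α₁·c₁`, the parameter sets `(η,β₀,β₁,φ,α₁) = (1,0,1,1,−2)` and
`(−1,0,1,1,2)` induce identical observed-data distributions: the densities of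
`(A, C₁, Y)` on `R=1` coincide pointwise, and the densities of `(A, Y)` on `R=0`
(obtained by integrating out `c₁`) coincide. -/

lemma expit_key (c : ℝ) : normPdf 1 1 c * expit (-2 * c) = normPdf (-1) 1 c * expit (2 * c) := by
  unfold normPdf expit
  have h0 : (0:ℝ) < 1 + Real.exp (2*c) := by positivity
  have h1 : (0:ℝ) < 1 + Real.exp (-(2*c)) := by positivity
  have e1 : Real.exp (-(c-1)^2/(2*1)) = Real.exp (-(c - -1)^2/(2*1)) * Real.exp (2*c) := by
    rw [← Real.exp_add]; ring_nf
  have hn : -(-2*c) = 2*c := by ring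
  rw [hn, e1]
  field_simp
  have h2 : Real.exp (2*c) * Real.exp (-(2*c)) = 1 := by rw [← Real.exp_add]; simp
  linear_combination h2

lemma one_sub_expit (t : ℝ) : 1 - expit t = expit (-t) := by
  unfold expit
  rw [neg_neg]
  have h1 : (0:ℝ) < 1 + Real.exp (-t) := by positivity
  have h2 : (0:ℝ) < 1 + Real.exp t := by positivity
  have h3 : Real.exp t * Real.exp (-t) = 1 := by rw [← Real.exp_add]; simp
  field_simp
  linear_combination h3

lemma prAc_neg (a : Bool) (c : ℝ) : prAc a (-c) = prAc a c := by
  unfold prAc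
  have : (-c)^2 = c^2 := by ring
  rw [this]

lemma prYac_neg (β₀ β₁ φ : ℝ) (a : Bool) (c y : ℝ) :
    prYac β₀ β₁ φ a (-c) y = prYac β₀ β₁ φ a c y := by
  unfold prYac
  rw [abs_neg]

lemma normPdf_neg (c : ℝ) : normPdf (-1) 1 (-c) = normPdf 1 1 c := by
  unfold normPdf
  have : -(-c - -1)^2 = -(c - 1)^2 := by ring
  rw [this]

theorem example_nonidentifiable_observed_distributions :
    (∀ (a : Bool) (c₁ y : ℝ),
      obsDensR1 1 0 1 1 (-2) a c₁ y = obsDensR1 (-1) 0 1 1 2 a c₁ y)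
    ∧ (∀ (a : Bool) (y : ℝ),
      (∫ c₁ : ℝ, obsDensR0Integrand 1 0 1 1 (-2) a c₁ y)
        = ∫ c₁ : ℝ, obsDensR0Integrand (-1) 0 1 1 2 a c₁ y) := by
  constructor
  · intro a c₁ y
    unfold obsDensR1
    have h := expit_key c₁
    have hn : (-2 : ℝ) * c₁ = -2 * c₁ := by ring
    rw [hn]
    linear_combination (prAc a c₁ * prYac 0 1 1 a c₁ y) * h
  · intro a y
    have hfun : (fun c : ℝ => obsDensR0Integrand 1 0 1 1 (-2) a c y)
        = (fun c : ℝ => obsDensR0Integrand (-1) 0 1 1 2 a (-c) y) := by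
      funext c
      unfold obsDensR0Integrand
      rw [prAc_neg, prYac_neg, normPdf_neg]
      have harg : (2 : ℝ) * -c = -2 * c := by ring
      rw [harg]
    rw [hfun]
    exact MeasureTheory.integral_neg_eq_self
      (fun c => obsDensR0Integrand (-1) 0 1 1 2 a c y) _

end
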